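/- Under Assumptions of no contradicting labels (empirical labels are a deterministic function of inputs) and full model flexibility, the minimizers of the empirical cross entropy loss satisfy p_θ(T|x_i) = 1[T = y_i] for all i, and consequently the induced representation T satisfies Î(T;Y) = Î(X;T) = Ĥ(Y) under the empirical distribution. -/

import Mathlib

open Finset

noncomputable def entropy {A : Type*} [Fintype A] (p : A → ℝ) : ℝ :=
  -∑ a, p a * Real.log (p a)

noncomputable def mutualInfo {A B : Type*} [Fintype A] [Fintype B] (p : A × B → ℝ) : ℝ :=
  ∑ a, ∑ b, p (a, b) * Real.log (p (a, b) / ((∑ b', p (a, b')) * (∑ a', p (a', b))))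

section aux
variable {N : ℕ} {A B : Type*} [Fintype A] [Fintype B] [DecidableEq A] [DecidableEq B]

lemma sum_ind_eval (v : Fin N → B) (h : B → ℝ) :
    ∑ b, (∑ i, if v i = b then (1:ℝ) else 0) * h b = ∑ i, h (v i) := by
  simp_rw [Finset.sum_mul, ite_mul, one_mul, zero_mul]
  rw [Finset.sum_comm]
  simp

lemma sum_ind_eval2 (u : Fin N → A) (v : Fin N → B) (g : A → B → ℝ) :
    ∑ a, ∑ b, (∑ i, if u i = a ∧ v i = b then (1:ℝ) else 0) * g a b
      = ∑ i, g (u i) (v i) := by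
  simp_rw [Finset.sum_mul, ite_mul, one_mul, zero_mul]
  have key : ∀ a : A, ∑ b, ∑ i, (if u i = a ∧ v i = b then g a b else 0)
      = ∑ i, if u i = a then g a (v i) else 0 := by
    intro a
    rw [Finset.sum_comm]
    congr 1; ext i
    by_cases h : u i = a <;> simp [h]
  simp_rw [key]
  rw [Finset.sum_comm]
  simp

lemma count_ge_one (v : Fin N → B) (i : Fin N) :
    (1:ℝ) ≤ ∑ j, if v j = v i then (1:ℝ) else 0 := by
  have := Finset.single_le_sum (f := fun j => if v j = v i then (1:ℝ) else 0)
    (fun j _ => by positivity) (Finset.mem_univ i)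
  simpa using this

lemma ent_emp (hN : 0 < N) (v : Fin N → B) :
    entropy (fun b => (N:ℝ)⁻¹ * ∑ i, if v i = b then (1:ℝ) else 0)
      = -((N:ℝ)⁻¹ * ∑ i, Real.log ((N:ℝ)⁻¹ * ∑ j, if v j = v i then (1:ℝ) else 0)) := by
  unfold entropy
  have : ∀ b : B, ((N:ℝ)⁻¹ * ∑ i, if v i = b then (1:ℝ) else 0) *
        Real.log ((N:ℝ)⁻¹ * ∑ i, if v i = b then (1:ℝ) else 0)
      = (N:ℝ)⁻¹ * ((∑ i, if v i = b then (1:ℝ) else 0) *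
        Real.log ((N:ℝ)⁻¹ * ∑ i, if v i = b then (1:ℝ) else 0)) := by
    intro b; ring
  simp_rw [this, ← Finset.mul_sum]
  congr 2
  exact sum_ind_eval v (fun b => Real.log ((N:ℝ)⁻¹ * ∑ j, if v j = b then (1:ℝ) else 0))

lemma mi_det (hN : 0 < N) (u : Fin N → A) (v : Fin N → B)
    (hdet : ∀ i j, u i = u j → v i = v j) :
    mutualInfo (fun z : A × B => (N:ℝ)⁻¹ * ∑ i, if u i = z.1 ∧ v i = z.2 then (1:ℝ) else 0)
      = -((N:ℝ)⁻¹ * ∑ i, Real.log ((N:ℝ)⁻¹ * ∑ j, if v j = v i then (1:ℝ) else 0)) := by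
  have hNr : (0:ℝ) < (N:ℝ)⁻¹ := by positivity
  set S : A → B → ℝ := fun a b => ∑ i, if u i = a ∧ v i = b then (1:ℝ) else 0 with hSdef
  set cu : A → ℝ := fun a => ∑ i, if u i = a then (1:ℝ) else 0 with hcudef
  set cv : B → ℝ := fun b => ∑ i, if v i = b then (1:ℝ) else 0 with hcvdef
  have hrow : ∀ a, ∑ b, S a b = cu a := by
    intro a
    rw [Finset.sum_comm]
    congr 1; ext i
    by_cases h : u i = a <;> simp [hSdef, hcudef, h]
  have hcol : ∀ b, ∑ a, S a b = cv b := by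
    intro b
    rw [Finset.sum_comm]
    congr 1; ext i
    by_cases h : v i = b <;> simp [hSdef, hcvdef, h]
  unfold mutualInfo
  simp only []
  have h1 : ∀ a : A, ∑ b', (N:ℝ)⁻¹ * S a b' = (N:ℝ)⁻¹ * cu a := by
    intro a; rw [← Finset.mul_sum, hrow]
  have h2 : ∀ b : B, ∑ a', (N:ℝ)⁻¹ * S a' b = (N:ℝ)⁻¹ * cv b := by
    intro b; rw [← Finset.mul_sum, hcol]
  change ∑ a, ∑ b, (N:ℝ)⁻¹ * S a b * Real.log ((N:ℝ)⁻¹ * S a b /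
    ((∑ b', (N:ℝ)⁻¹ * S a b') * (∑ a', (N:ℝ)⁻¹ * S a' b))) = _
  simp_rw [h1, h2]
  have h3 : ∀ a b, ((N:ℝ)⁻¹ * S a b) *
        Real.log (((N:ℝ)⁻¹ * S a b) / ((N:ℝ)⁻¹ * cu a * ((N:ℝ)⁻¹ * cv b)))
      = (N:ℝ)⁻¹ * (S a b *
        Real.log (((N:ℝ)⁻¹ * S a b) / ((N:ℝ)⁻¹ * cu a * ((N:ℝ)⁻¹ * cv b)))) := by
    intro a b; ring
  simp_rw [h3, ← Finset.mul_sum]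
  rw [sum_ind_eval2 u v (fun a b =>
    Real.log (((N:ℝ)⁻¹ * S a b) / ((N:ℝ)⁻¹ * cu a * ((N:ℝ)⁻¹ * cv b))))]
  rw [← mul_neg, ← Finset.sum_neg_distrib]
  congr 1
  apply Finset.sum_congr rfl
  intro i _
  have hSval : S (u i) (v i) = cu (u i) := by
    simp only [hSdef, hcudef]
    congr 1; ext j
    by_cases h : u j = u i
    · simp [h, hdet j i h]
    · simp [h]
  have hcu : (0:ℝ) < cu (u i) := lt_of_lt_of_le one_pos (count_ge_one u i)
  have hcv : (0:ℝ) < cv (v i) := lt_of_lt_of_le one_pos (count_ge_one v i)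
  rw [hSval]
  have : ((N:ℝ)⁻¹ * cu (u i)) / ((N:ℝ)⁻¹ * cu (u i) * ((N:ℝ)⁻¹ * cv (v i)))
      = ((N:ℝ)⁻¹ * cv (v i))⁻¹ := by
    field_simp
  rw [this, Real.log_inv]

end aux

theorem crossEntropy_minimizer_minimal_sufficiency
    {X Y : Type*} [Fintype X] [Fintype Y] [DecidableEq X] [DecidableEq Y]
    (N : ℕ) (hN : 0 < N) (x : Fin N → X) (y : Fin N → Y)
    (hnc : ∀ i j, x i = x j → y i = y j)
    (cond : X → Y → ℝ)
    (hcond0 : ∀ a t, 0 ≤ cond a t) (hcond1 : ∀ a, ∑ t, cond a t = 1)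
    (hpos : ∀ i, 0 < cond (x i) (y i))
    (hmin : ∀ cond' : X → Y → ℝ,
      (∀ a t, 0 ≤ cond' a t) → (∀ a, ∑ t, cond' a t = 1) →
      (∀ i, 0 < cond' (x i) (y i)) →
      (1 / (N : ℝ)) * ∑ i, -Real.log (cond (x i) (y i))
        ≤ (1 / (N : ℝ)) * ∑ i, -Real.log (cond' (x i) (y i))) :
    (∀ i t, cond (x i) t = if t = y i then 1 else 0) ∧
      mutualInfo (fun z : Y × Y =>
          (N : ℝ)⁻¹ * ∑ i, if y i = z.2 then cond (x i) z.1 else 0)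
        = entropy (fun b => (N : ℝ)⁻¹ * ∑ i, if y i = b then 1 else 0) ∧
      mutualInfo (fun z : X × Y =>
          (N : ℝ)⁻¹ * ∑ i, if x i = z.1 then cond z.1 z.2 else 0)
        = entropy (fun b => (N : ℝ)⁻¹ * ∑ i, if y i = b then 1 else 0) := by
  classical
  -- Step 1: the minimizer is the indicator conditional.
  set y0 : Y := y ⟨0, hN⟩ with hy0
  set cond' : X → Y → ℝ := fun a t =>
    if h : ∃ i, x i = a then (if t = y h.choose then 1 else 0)
    else (if t = y0 then 1 else 0) with hcond'
  have hc'0 : ∀ a t, 0 ≤ cond' a t := by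
    intro a t; simp only [hcond']; split <;> split <;> norm_num
  have hc'1 : ∀ a, ∑ t, cond' a t = 1 := by
    intro a; simp only [hcond']; split <;> simp
  have hc'val : ∀ i, cond' (x i) (y i) = 1 := by
    intro i
    have h : ∃ j, x j = x i := ⟨i, rfl⟩
    have hy : y h.choose = y i := hnc _ _ h.choose_spec
    simp only [hcond', dif_pos h, hy, if_pos rfl]
    simp
  have hc'pos : ∀ i, 0 < cond' (x i) (y i) := by
    intro i; rw [hc'val i]; norm_num
  have hle1 : ∀ i, cond (x i) (y i) ≤ 1 := by
    intro i
    have := Finset.single_le_sum (f := fun t => cond (x i) t)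
      (fun t _ => hcond0 (x i) t) (Finset.mem_univ (y i))
    rw [hcond1 (x i)] at this
    exact this
  have hterm : ∀ i : Fin N, 0 ≤ -Real.log (cond (x i) (y i)) := by
    intro i
    rw [neg_nonneg]
    exact Real.log_nonpos (le_of_lt (hpos i)) (hle1 i)
  have hsum0 : ∑ i, -Real.log (cond (x i) (y i)) ≤ 0 := by
    have h := hmin cond' hc'0 hc'1 hc'pos
    have h2 : ∑ i : Fin N, -Real.log (cond' (x i) (y i)) = 0 := by
      apply Finset.sum_eq_zero; intro i _; rw [hc'val i]; simp
    rw [h2, mul_zero] at h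
    have hNr : (0:ℝ) < 1 / (N:ℝ) := by positivity
    nlinarith
  have hzero : ∀ i : Fin N, -Real.log (cond (x i) (y i)) = 0 := by
    have hsum : ∑ i, -Real.log (cond (x i) (y i)) = 0 :=
      le_antisymm hsum0 (Finset.sum_nonneg (fun i _ => hterm i))
    intro i
    exact (Finset.sum_eq_zero_iff_of_nonneg (fun i _ => hterm i)).1 hsum i (Finset.mem_univ i)
  have hone : ∀ i, cond (x i) (y i) = 1 := by
    intro i
    have hlog : Real.log (cond (x i) (y i)) = 0 := by
      have := hzero i; linarith
    rcases Real.log_eq_zero.1 hlog with h | h | h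
    · exact absurd h (ne_of_gt (hpos i))
    · exact h
    · exact absurd h (by nlinarith [hpos i])
  have hdelta : ∀ i t, cond (x i) t = if t = y i then 1 else 0 := by
    intro i t
    by_cases h : t = y i
    · rw [if_pos h, h, hone i]
    · rw [if_neg h]
      have hsplit : cond (x i) (y i) + ∑ t' ∈ Finset.univ.erase (y i), cond (x i) t' = 1 := by
        rw [Finset.add_sum_erase Finset.univ (cond (x i)) (Finset.mem_univ (y i))]
        exact hcond1 (x i)
      have hrest : ∑ t' ∈ Finset.univ.erase (y i), cond (x i) t' = 0 := by
        rw [hone i] at hsplit; linarith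
      exact (Finset.sum_eq_zero_iff_of_nonneg
        (fun t' _ => hcond0 (x i) t')).1 hrest t (Finset.mem_erase.2 ⟨h, Finset.mem_univ t⟩)
  refine ⟨hdelta, ?_, ?_⟩
  · have heq1 : (fun z : Y × Y => (N:ℝ)⁻¹ * ∑ i, if y i = z.2 then cond (x i) z.1 else 0)
        = (fun z : Y × Y => (N:ℝ)⁻¹ * ∑ i, if y i = z.1 ∧ y i = z.2 then (1:ℝ) else 0) := by
      funext z; congr 1; apply Finset.sum_congr rfl; intro i _
      by_cases h2 : y i = z.2
      · rw [if_pos h2, hdelta i]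
        by_cases h1 : y i = z.1
        · rw [if_pos h1.symm, if_pos ⟨h1, h2⟩]
        · rw [if_neg (fun hh => h1 hh.symm), if_neg (fun hh => h1 hh.1)]
      · rw [if_neg h2, if_neg (fun hh => h2 hh.2)]
    rw [heq1, mi_det hN y y (fun i j h => h), ent_emp hN y]
  · have heq2 : (fun z : X × Y => (N:ℝ)⁻¹ * ∑ i, if x i = z.1 then cond z.1 z.2 else 0)
        = (fun z : X × Y => (N:ℝ)⁻¹ * ∑ i, if x i = z.1 ∧ y i = z.2 then (1:ℝ) else 0) := by
      funext z; congr 1; apply Finset.sum_congr rfl; intro i _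
      by_cases h1 : x i = z.1
      · have hcz : cond z.1 z.2 = if z.2 = y i then 1 else 0 := by
          rw [← h1]; exact hdelta i z.2
        rw [if_pos h1, hcz]
        by_cases h2 : y i = z.2
        · rw [if_pos h2.symm, if_pos ⟨h1, h2⟩]
        · rw [if_neg (fun hh => h2 hh.symm), if_neg (fun hh => h2 hh.2)]
      · rw [if_neg h1, if_neg (fun hh => h1 hh.1)]
    rw [heq2, mi_det hN x y hnc, ent_emp hN y]
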